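/- Let K be a field, let A be an n×n matrix over K, and let 1 ≤ s ≤ n. If the rank of A is at most n − s, then A * D_s(A) = 0; that is, every column of the reduced order-one complement of order s of A lies in the kernel of A. -/

import Mathlib

open Matrix Polynomial


/-- Degree bound for determinants with per-column degree bounds. -/
lemma natDegree_det_le_sum {m : Type*} [Fintype m] [DecidableEq m] {R : Type*} [CommRing R]
    (M : Matrix m m (Polynomial R)) (d : m → ℕ) (h : ∀ i j, (M i j).natDegree ≤ d j) :
    M.det.natDegree ≤ ∑ j, d j := by
  rw [Matrix.det_apply']
  refine Polynomial.natDegree_sum_le_of_forall_le _ _ fun σ _ => ?_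
  refine Polynomial.natDegree_mul_le.trans ?_
  rw [Polynomial.natDegree_intCast, zero_add]
  exact (Polynomial.natDegree_prod_le _ _).trans (Finset.sum_le_sum fun i _ => h (σ i) i)

lemma natDegree_adjugate_le {m : Type*} [Fintype m] [DecidableEq m] {R : Type*} [CommRing R]
    (M : Matrix m m (Polynomial R)) (hM : ∀ i j, (M i j).natDegree ≤ 1) (i j : m) :
    (M.adjugate i j).natDegree ≤ Fintype.card m - 1 := by
  rw [Matrix.adjugate_apply, ← Matrix.det_transpose, ← Matrix.updateCol_transpose]
  have hb : ∀ a b, ((Mᵀ.updateCol j (Pi.single i 1)) a b).natDegree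
      ≤ (fun k => if k = j then 0 else 1) b := by
    intro a b
    rw [Matrix.updateCol_apply]
    by_cases hbj : b = j
    · simp only [hbj, if_pos rfl]
      rcases Pi.single_apply i (1 : Polynomial R) a with _
      by_cases hai : a = i
      · simp [hai, Pi.single_apply]
      · simp [Pi.single_apply, hai]
    · simpa [hbj] using hM b a
  refine (natDegree_det_le_sum _ _ hb).trans ?_
  have : (∑ k : m, if k = j then 0 else 1) = Fintype.card m - 1 := by
    simp [Finset.sum_ite, Finset.filter_ne', Finset.card_erase_of_mem]
  rw [this]

lemma exists_rank_factorization {K : Type*} [Field K] {n m : ℕ}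
    (A : Matrix (Fin n) (Fin n) K) (h : A.rank ≤ m) :
    ∃ (C : Matrix (Fin n) (Fin m) K) (R : Matrix (Fin m) (Fin n) K), A = C * R := by
  classical
  set f := A.mulVecLin with hf
  set W := LinearMap.range f with hW
  have hr : Module.finrank K W = A.rank := rfl
  rcases Nat.eq_zero_or_pos A.rank with h0 | hpos
  · -- rank 0 : A = 0
    have hWbot : W = ⊥ := Submodule.finrank_eq_zero.mp (by rw [hr, h0])
    have hf0 : f = 0 := LinearMap.range_eq_bot.mp hWbot
    have : A = 0 := by
      have := congrArg LinearMap.toMatrix' hf0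
      rw [hf, ← Matrix.toLin'_apply', LinearMap.toMatrix'_toLin'] at this
      rw [this]; ext i j; simp [LinearMap.toMatrix'_apply]
    exact ⟨0, 0, by simp [this]⟩
  · set r := A.rank with hrdef
    have hrm : r ≤ m := h
    have hr0 : 0 < r := hpos
    -- surjection Fin m → Fin r
    let p : Fin m → Fin r := fun i => if hi : (i : ℕ) < r then ⟨i, hi⟩ else ⟨0, hr0⟩
    have hp : Function.Surjective p := by
      intro x
      refine ⟨⟨x, lt_of_lt_of_le x.2 hrm⟩, ?_⟩
      simp only [p]
      rw [dif_pos x.2]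
    have : Module.Finite K W := inferInstance
    let b : Module.Basis (Fin r) K W := Module.finBasisOfFinrankEq K W hr
    let φ : W →ₗ[K] (Fin m → K) := (LinearMap.funLeft K K p).comp b.equivFun.toLinearMap
    have hφ : Function.Injective φ :=
      (LinearMap.funLeft_injective_of_surjective K K p hp).comp b.equivFun.injective
    obtain ⟨ψ, hψ⟩ := φ.exists_leftInverse_of_injective (LinearMap.ker_eq_bot.mpr hφ)
    let g : (Fin m → K) →ₗ[K] (Fin n → K) := W.subtype.comp ψ
    let h' : (Fin n → K) →ₗ[K] (Fin m → K) := φ.comp f.rangeRestrict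
    have hgh : g.comp h' = f := by
      refine LinearMap.ext fun x => ?_
      have : ψ (φ (f.rangeRestrict x)) = f.rangeRestrict x := by
        have := congrFun (congrArg (fun t => t.toFun) hψ) (f.rangeRestrict x)
        simpa using this
      simp [g, h', this]
    refine ⟨LinearMap.toMatrix' g, LinearMap.toMatrix' h', ?_⟩
    rw [← LinearMap.toMatrix'_comp, hgh, hf, ← Matrix.toLin'_apply', LinearMap.toMatrix'_toLin']

section Key
variable {K : Type*} [Field K] {n m : ℕ}
  (C : Matrix (Fin n) (Fin m) K) (R : Matrix (Fin m) (Fin n) K)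

/-- Explicit formula for the adjugate of `1 + X • (C*R)`. -/
lemma adjugate_one_add_X_smul_mul :
    (1 + (X : Polynomial K) • ((C * R).map Polynomial.C)).adjugate
      = (1 + (X : Polynomial K) • ((R * C).map Polynomial.C)).det
          • (1 : Matrix (Fin n) (Fin n) (Polynomial K))
        - (X : Polynomial K) • (C.map Polynomial.C
            * (1 + (X : Polynomial K) • ((R * C).map Polynomial.C)).adjugate
            * R.map Polynomial.C) := by
  classical
  set C' := C.map (Polynomial.C : K →+* Polynomial K) with hC'
  set R' := R.map (Polynomial.C : K →+* Polynomial K) with hR'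
  have hCR : (C * R).map (Polynomial.C : K →+* Polynomial K) = C' * R' := Matrix.map_mul
  have hRC : (R * C).map (Polynomial.C : K →+* Polynomial K) = R' * C' := Matrix.map_mul
  rw [hCR, hRC]
  set u : Matrix (Fin n) (Fin n) (Polynomial K) := 1 + (X : Polynomial K) • (C' * R') with hu
  set v : Matrix (Fin m) (Fin m) (Polynomial K) := 1 + (X : Polynomial K) • (R' * C') with hv
  set N : Matrix (Fin n) (Fin n) (Polynomial K) :=
    v.det • 1 - (X : Polynomial K) • (C' * v.adjugate * R') with hN
  -- det u = det v
  have hdet : u.det = v.det := by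
    rw [hu, hv, ← Matrix.smul_mul, Matrix.det_one_add_mul_comm, Matrix.mul_smul]
  -- u * C' = C' * v
  have huC : u * C' = C' * v := by
    rw [hu, hv, Matrix.add_mul, Matrix.mul_add, Matrix.one_mul, Matrix.mul_one,
      Matrix.smul_mul, Matrix.mul_smul, Matrix.mul_assoc]
  -- u * N = det u • 1
  have huN : u * N = u.det • 1 := by
    rw [hN, Matrix.mul_sub, Matrix.mul_smul, Matrix.mul_smul,
      ← Matrix.mul_assoc, ← Matrix.mul_assoc, huC, Matrix.mul_assoc C' v,
      Matrix.mul_adjugate, Matrix.mul_smul, Matrix.mul_one, Matrix.smul_mul,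
      hdet]
    rw [hu]
    simp only [Matrix.mul_one]
    rw [smul_add, smul_comm (X : Polynomial K) v.det]
    abel
  -- det u ≠ 0
  have hdet0 : u.det ≠ 0 := by
    have h1 : Polynomial.eval 0 u.det = 1 := by
      have hmap : (Polynomial.evalRingHom (0 : K)).mapMatrix u = 1 := by
        ext i j
        simp [hu, RingHom.mapMatrix_apply, Matrix.map_apply, Matrix.one_apply,
          Matrix.add_apply, Matrix.smul_apply, apply_ite]
      rw [show Polynomial.eval 0 u.det = (Polynomial.evalRingHom (0 : K)) u.det from rfl,
        RingHom.map_det, hmap, Matrix.det_one]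
    intro h0
    rw [h0] at h1
    simp at h1
  -- cancel
  have h2 : u.det • N = u.det • u.adjugate := by
    calc u.det • N = (u.adjugate * u) * N := by rw [Matrix.adjugate_mul, Matrix.smul_mul, Matrix.one_mul]
    _ = u.adjugate * (u * N) := by rw [Matrix.mul_assoc]
    _ = u.adjugate * (u.det • 1) := by rw [huN]
    _ = u.det • u.adjugate := by rw [Matrix.mul_smul, Matrix.mul_one]
  refine Matrix.ext fun i j => ?_
  have h3 := congrArg (fun M => M i j) h2
  simp only [Matrix.smul_apply, smul_eq_mul] at h3
  exact mul_left_cancel₀ hdet0 h3.symm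

end Key


/-- The reduced order-one complement of order `s` of an `n×n` matrix `A`:
the matrix whose `(i,j)` entry is the coefficient of `z^(n-s)` in the `(i,j)` entry
of `adjugate (1 + z • A)`, computed over the polynomial ring `R[z]`. -/
noncomputable def redComp {R : Type*} [CommRing R] {n : ℕ} (s : ℕ)
    (A : Matrix (Fin n) (Fin n) R) : Matrix (Fin n) (Fin n) R :=
  Matrix.of fun i j =>
    (((1 + (Polynomial.X : Polynomial R) • A.map (fun a => Polynomial.C a) :
        Matrix (Fin n) (Fin n) (Polynomial R)).adjugate) i j).coeff (n - s)

/-- For an `n×n` matrix `A` over a field `K` with `1 ≤ s ≤ n`, if the rank of `A`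
is at most `n − s` then `A * D_s(A) = 0`: every column of the reduced order-one
complement of order `s` of `A` lies in the kernel of `A`. -/
theorem mul_redComp_eq_zero_of_rank_le {K : Type*} [Field K] {n : ℕ}
    (A : Matrix (Fin n) (Fin n) K) (s : ℕ) (hs1 : 1 ≤ s) (hsn : s ≤ n)
    (hrank : A.rank ≤ n - s) :
    A * redComp s A = 0 := by
  classical
  set m := n - s with hm
  obtain ⟨Cm, Rm, hA⟩ := exists_rank_factorization A hrank
  set C' := Cm.map (Polynomial.C : K →+* Polynomial K) with hC'
  set R' := Rm.map (Polynomial.C : K →+* Polynomial K) with hR'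
  set v : Matrix (Fin m) (Fin m) (Polynomial K) :=
    1 + (X : Polynomial K) • ((Rm * Cm).map Polynomial.C) with hv
  set u : Matrix (Fin n) (Fin n) (Polynomial K) :=
    1 + (X : Polynomial K) • (A.map fun a => Polynomial.C a) with hu
  have hu' : u = 1 + (X : Polynomial K) • ((Cm * Rm).map Polynomial.C) := by
    rw [hu, hA]
  have key : u.adjugate = v.det • 1 - (X : Polynomial K) • (C' * v.adjugate * R') := by
    rw [hu']
    exact adjugate_one_add_X_smul_mul Cm Rm
  -- degree bounds
  have hv1 : ∀ i j, (v i j).natDegree ≤ 1 := by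
    intro i j
    rw [hv, Matrix.add_apply, Matrix.smul_apply, Matrix.map_apply, smul_eq_mul]
    refine (Polynomial.natDegree_add_le _ _).trans ?_
    have h1 : ((1 : Matrix (Fin m) (Fin m) (Polynomial K)) i j).natDegree = 0 := by
      rcases eq_or_ne i j with h | h <;> simp [Matrix.one_apply, h]
    have h2 : ((X : Polynomial K) * Polynomial.C ((Rm * Cm) i j)).natDegree ≤ 1 :=
      Polynomial.natDegree_mul_le.trans (by simp)
    omega
  have hdetv : v.det.natDegree ≤ m := by
    refine (natDegree_det_le_sum v (fun _ => 1) hv1).trans ?_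
    simp
  have hadjv : ∀ k l, (v.adjugate k l).natDegree ≤ m - 1 := by
    intro k l
    simpa using natDegree_adjugate_le v hv1 k l
  have hE : ∀ i j, ((C' * v.adjugate * R') i j).natDegree ≤ m - 1 := by
    intro i j
    rw [Matrix.mul_apply]
    refine Polynomial.natDegree_sum_le_of_forall_le _ _ fun l _ => ?_
    refine Polynomial.natDegree_mul_le.trans ?_
    have h2 : (R' l j).natDegree = 0 := by rw [hR', Matrix.map_apply]; simp
    have h1 : ((C' * v.adjugate) i l).natDegree ≤ m - 1 := by
      rw [Matrix.mul_apply]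
      refine Polynomial.natDegree_sum_le_of_forall_le _ _ fun k _ => ?_
      refine Polynomial.natDegree_mul_le.trans ?_
      have : (C' i k).natDegree = 0 := by rw [hC', Matrix.map_apply]; simp
      have := hadjv k l
      omega
    omega
  have hadju : ∀ i j, (u.adjugate i j).natDegree ≤ m := by
    intro i j
    rw [key, Matrix.sub_apply, Matrix.smul_apply, Matrix.smul_apply, smul_eq_mul, smul_eq_mul]
    refine (Polynomial.natDegree_sub_le _ _).trans ?_
    have h1 : (v.det * (1 : Matrix (Fin n) (Fin n) (Polynomial K)) i j).natDegree ≤ m := by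
      refine Polynomial.natDegree_mul_le.trans ?_
      have : ((1 : Matrix (Fin n) (Fin n) (Polynomial K)) i j).natDegree = 0 := by
        rcases eq_or_ne i j with h | h <;> simp [Matrix.one_apply, h]
      omega
    have h2 : ((X : Polynomial K) * (C' * v.adjugate * R') i j).natDegree ≤ m := by
      rcases Nat.eq_zero_or_pos m with h0 | h0
      · have : (C' * v.adjugate * R') i j = 0 := by
          rw [Matrix.mul_apply]
          have : (Finset.univ : Finset (Fin m)) = ∅ := by
            rw [h0] at *
            exact Finset.univ_eq_empty
          rw [this, Finset.sum_empty]
        rw [this, mul_zero]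
        simp [h0]
      · refine Polynomial.natDegree_mul_le.trans ?_
        have := hE i j
        rw [Polynomial.natDegree_X]
        omega
    omega
  have hdetu : u.det = v.det := by
    rw [hu', hv, Matrix.map_mul, Matrix.map_mul, ← Matrix.smul_mul,
      Matrix.det_one_add_mul_comm, Matrix.mul_smul]
  -- coefficient extraction
  ext i j
  have hmain := congrArg (fun M => ((M : Matrix (Fin n) (Fin n) (Polynomial K)) i j).coeff (m+1))
    (Matrix.mul_adjugate u)
  simp only [Matrix.mul_apply, Matrix.smul_apply, smul_eq_mul,
    Polynomial.finset_sum_coeff] at hmain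
  have hterm : ∀ k, (u i k * u.adjugate k j).coeff (m+1) = A i k * (u.adjugate k j).coeff m := by
    intro k
    have hik : u i k = (1 : Matrix (Fin n) (Fin n) (Polynomial K)) i k
        + X * Polynomial.C (A i k) := by
      rw [hu, Matrix.add_apply, Matrix.smul_apply, Matrix.map_apply, smul_eq_mul]
    rw [hik, add_mul, Polynomial.coeff_add]
    have h1 : ((1 : Matrix (Fin n) (Fin n) (Polynomial K)) i k * u.adjugate k j).coeff (m+1)
        = 0 := by
      rcases eq_or_ne i k with h | h
      · rw [h, Matrix.one_apply_eq, one_mul]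
        exact Polynomial.coeff_eq_zero_of_natDegree_lt
          (lt_of_le_of_lt (hadju k j) (Nat.lt_succ_self m))
      · simp [Matrix.one_apply, h]
    rw [h1, zero_add, mul_assoc, Polynomial.coeff_X_mul, Polynomial.coeff_C_mul]
  rw [Finset.sum_congr rfl (fun k _ => hterm k)] at hmain
  have hRHS : (u.det * (1 : Matrix (Fin n) (Fin n) (Polynomial K)) i j).coeff (m+1) = 0 := by
    rcases eq_or_ne i j with h | h
    · rw [Matrix.one_apply, if_pos h, mul_one, hdetu]
      exact Polynomial.coeff_eq_zero_of_natDegree_lt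
        (lt_of_le_of_lt hdetv (Nat.lt_succ_self m))
    · simp [Matrix.one_apply, h]
  rw [hRHS] at hmain
  show (A * redComp s A) i j = 0
  rw [Matrix.mul_apply]
  have hred : ∀ k, redComp s A k j = (u.adjugate k j).coeff m := fun k => rfl
  calc ∑ k, A i k * redComp s A k j = ∑ k, A i k * (u.adjugate k j).coeff m := by
        exact Finset.sum_congr rfl fun k _ => by rw [hred]
    _ = 0 := hmain
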